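/- Let θ ↦ V_θ be an analytic family of isometries of the form V_θ = (U_θ ⊗ id_K)V U_θ*, where V = V_{θ₀} is primitive with stationary state ρ_ss, U_θ is an analytic family of unitaries on H with U_{θ₀} = id, and H = −i(dU_θ*/dθ)|_{θ₀} is selfadjoint. Then the quantum Fisher information F = 4 tr{ρ_ss E[GG* + 2Re(G(id ⊗ R∘E(G*)))]} vanishes, where G* = i(dV_θ/dθ)|_{θ₀}V*, E(X) = V*XV, and R is the inverse of (Id − T) on the traceless-in-ρ_ss subspace with T(X) = V*(X ⊗ id_K)V. -/

import Mathlib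

open Matrix Filter
open scoped Kronecker ComplexOrder

noncomputable section

/-- The action of `Φ ⊗ id_n` on block matrices, used to define complete positivity. -/
def tensorId {a b : Type*} (Φ : Matrix a a ℂ → Matrix b b ℂ) (n : ℕ)
    (X : Matrix (a × Fin n) (a × Fin n) ℂ) : Matrix (b × Fin n) (b × Fin n) ℂ :=
  fun p q => Φ (fun i j => X (i, p.2) (j, q.2)) p.1 q.1

/-- A map between matrix algebras is completely positive if `Φ ⊗ id_n` preserves
positive semidefiniteness for every `n`. -/
def IsCompletelyPositive {a b : Type*} [Fintype a] [Fintype b]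
    (Φ : Matrix a a ℂ → Matrix b b ℂ) : Prop :=
  ∀ (n : ℕ) (X : Matrix (a × Fin n) (a × Fin n) ℂ), X.PosSemidef → (tensorId Φ n X).PosSemidef

/-- The map `X ↦ V₁* (X ⊗ 1_K) V₂` on `B(H₂, H₁)`, as a linear endomorphism.
For `V₁ = V₂ = V` this is the Heisenberg channel associated with the isometry `V`. -/
def sandwich {α β : Type*} [Fintype α] [Fintype β] {k : ℕ}
    (V₁ : Matrix (α × Fin k) α ℂ) (V₂ : Matrix (β × Fin k) β ℂ) :
    Module.End ℂ (Matrix α β ℂ) where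
  toFun X := V₁ᴴ * (X ⊗ₖ (1 : Matrix (Fin k) (Fin k) ℂ)) * V₂
  map_add' X Y := by simp [Matrix.add_kronecker, Matrix.add_mul, Matrix.mul_add]
  map_smul' c X := by simp [Matrix.smul_kronecker, Matrix.smul_mul, Matrix.mul_smul]

/-- The Kraus operators `K_i` of an isometry `V : H → H ⊗ K`,
defined by `K_i φ = (id ⊗ ⟨i|) V φ`. -/
def kraus {D k : ℕ} (V : Matrix (Fin D × Fin k) (Fin D) ℂ) (i : Fin k) :
    Matrix (Fin D) (Fin D) ℂ :=
  fun a b => V (a, i) b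

/-- The `n`-step Kraus operator `K_{ι(n-1)} ⋯ K_{ι(0)}` associated with a word `ι`. -/
def krausString {D k : ℕ} (V : Matrix (Fin D × Fin k) (Fin D) ℂ) :
    (n : ℕ) → (Fin n → Fin k) → Matrix (Fin D) (Fin D) ℂ
  | 0, _ => 1
  | n + 1, ι => kraus V (ι (Fin.last n)) * krausString V n (fun m => ι m.castSucc)

/-- The output state `tr_H [V(n) ρ V(n)*]` after `n` steps, a density matrix on `K^⊗n`. -/
def outputState {D k : ℕ} (V : Matrix (Fin D × Fin k) (Fin D) ℂ)
    (ρ : Matrix (Fin D) (Fin D) ℂ) (n : ℕ) :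
    Matrix (Fin n → Fin k) (Fin n → Fin k) ℂ :=
  fun ι ι' => Matrix.trace (krausString V n ι * ρ * (krausString V n ι')ᴴ)

/-- The Schrödinger (predual) transition map `ρ ↦ Σ_i K_i ρ K_i*`. -/
def schrodinger {D k : ℕ} (V : Matrix (Fin D × Fin k) (Fin D) ℂ)
    (ρ : Matrix (Fin D) (Fin D) ℂ) : Matrix (Fin D) (Fin D) ℂ :=
  ∑ i, kraus V i * ρ * (kraus V i)ᴴ

/-- A linear endomorphism of a matrix algebra is primitive if some power of it maps every
nonzero positive semidefinite matrix to a positive definite one. -/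
def PrimitiveMap {α : Type*} [Fintype α] [DecidableEq α]
    (T : Module.End ℂ (Matrix α α ℂ)) : Prop :=
  ∃ n : ℕ, ∀ X : Matrix α α ℂ, X.PosSemidef → X ≠ 0 → ((T ^ n) X).PosDef

/-- An isometry `V : H → H ⊗ K` is primitive if its channel `X ↦ V*(X ⊗ 1)V` is primitive. -/
def PrimitiveIso {D k : ℕ} (V : Matrix (Fin D × Fin k) (Fin D) ℂ) : Prop :=
  PrimitiveMap (sandwich V V)

/-- The pure state `|x⟩⟨x|` associated with a vector `x`. -/
def outer {α : Type*} (x : α → ℂ) : Matrix α α ℂ := Matrix.vecMulVec x (star x)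

/-- The trace norm of a matrix: the trace of `√(A* A)`. -/
def traceNorm {α : Type*} [Fintype α] [DecidableEq α] (A : Matrix α α ℂ) : ℝ :=
  ((Matrix.posSemidef_conjTranspose_mul_self A).1.eigenvectorUnitary.1 *
    Matrix.diagonal (fun i => ((Real.sqrt
      ((Matrix.posSemidef_conjTranspose_mul_self A).1.eigenvalues i) : ℝ) : ℂ)) *
    (star (Matrix.posSemidef_conjTranspose_mul_self A).1.eigenvectorUnitary :
      Matrix α α ℂ)).trace.re

/-- A quantum channel: a completely positive trace preserving linear map. -/
def IsCPTP {α β : Type*} [Fintype α] [Fintype β]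
    (Φ : Matrix α α ℂ →ₗ[ℂ] Matrix β β ℂ) : Prop :=
  IsCompletelyPositive (Φ : Matrix α α ℂ → Matrix β β ℂ) ∧
    ∀ X : Matrix α α ℂ, (Φ X).trace = X.trace

/-- For a family `V_θ = (U_θ ⊗ 1) V U_θ*` obtained from a primitive isometry `V` by a unitary
conjugation with generator `H`, the derivative satisfies `i V̇ = (H ⊗ 1)V − VH`, and the
quantum Fisher information `F = 4 tr{ρ_ss E[GG* + 2Re(G (R∘E(G*) ⊗ 1))]}` vanishes, where
`G* = i V̇ V*`, `E(X) = V* X V`, and `S = R∘E(G*)` is the unique solution of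
`(Id − T)S = E(G*)` with `tr[ρ_ss S] = 0`. -/
theorem unidentifiable_parameter_zero_fisher_information (D k : ℕ)
    (V : Matrix (Fin D × Fin k) (Fin D) ℂ) (hV : Vᴴ * V = 1) (hP : PrimitiveIso V)
    (ρ : Matrix (Fin D) (Fin D) ℂ) (hρpos : ρ.PosDef) (hρtr : ρ.trace = 1)
    (hρstat : schrodinger V ρ = ρ)
    (Hm : Matrix (Fin D) (Fin D) ℂ) (hHm : Hmᴴ = Hm)
    (Vdot : Matrix (Fin D × Fin k) (Fin D) ℂ)
    (hdV : Complex.I • Vdot = (Hm ⊗ₖ (1 : Matrix (Fin k) (Fin k) ℂ)) * V - V * Hm) :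
    ∀ S : Matrix (Fin D) (Fin D) ℂ, (ρ * S).trace = 0 →
      S - sandwich V V S = Vᴴ * ((Complex.I • Vdot) * Vᴴ) * V →
      (4 : ℂ) * (ρ *
        (Vᴴ * (((Complex.I • Vdot) * Vᴴ)ᴴ * ((Complex.I • Vdot) * Vᴴ)) * V +
         Vᴴ * (((Complex.I • Vdot) * Vᴴ)ᴴ * (S ⊗ₖ (1 : Matrix (Fin k) (Fin k) ℂ))) * V +
         (Vᴴ * (((Complex.I • Vdot) * Vᴴ)ᴴ * (S ⊗ₖ (1 : Matrix (Fin k) (Fin k) ℂ))) * V)ᴴ)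
        ).trace = 0 := by

  intro S hS1 hS2
  rw [hdV] at hS2 ⊢
  simp only [sandwich, LinearMap.coe_mk, AddHom.coe_mk] at hS2
  -- (X ⊗ₖ 1)ᴴ = Xᴴ ⊗ₖ 1
  have kone : ∀ X : Matrix (Fin D) (Fin D) ℂ,
      (X ⊗ₖ (1 : Matrix (Fin k) (Fin k) ℂ))ᴴ = Xᴴ ⊗ₖ 1 := by
    intro X
    ext ⟨a, i⟩ ⟨b, j⟩
    simp only [Matrix.conjTranspose_apply, Matrix.kroneckerMap_apply, Matrix.one_apply]
    by_cases h : i = j <;> simp [h, eq_comm]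
  have hV' : ∀ X : Matrix (Fin D) (Fin D) ℂ, Vᴴ * (V * X) = X := by
    intro X; rw [← Matrix.mul_assoc, hV, Matrix.one_mul]
  have hk : ∀ X Y : Matrix (Fin D) (Fin D) ℂ,
      (X ⊗ₖ (1 : Matrix (Fin k) (Fin k) ℂ)) * (Y ⊗ₖ (1 : Matrix (Fin k) (Fin k) ℂ)) = (X * Y) ⊗ₖ (1 : Matrix (Fin k) (Fin k) ℂ) := by
    intro X Y; rw [← Matrix.mul_kronecker_mul, Matrix.one_mul]
  have hk' : ∀ (X Y : Matrix (Fin D) (Fin D) ℂ) (B : Matrix (Fin D × Fin k) (Fin D) ℂ),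
      (X ⊗ₖ (1 : Matrix (Fin k) (Fin k) ℂ)) * ((Y ⊗ₖ (1 : Matrix (Fin k) (Fin k) ℂ)) * B) = ((X * Y) ⊗ₖ (1 : Matrix (Fin k) (Fin k) ℂ)) * B := by
    intro X Y B; rw [← Matrix.mul_assoc, hk]
  -- stationarity: tr[ρ T(X)] = tr[ρ X]
  have stat : ∀ X : Matrix (Fin D) (Fin D) ℂ,
      (ρ * (Vᴴ * (X ⊗ₖ (1 : Matrix (Fin k) (Fin k) ℂ)) * V)).trace = (ρ * X).trace := by
    intro X
    have e1 : (ρ * (Vᴴ * (X ⊗ₖ (1 : Matrix (Fin k) (Fin k) ℂ)) * V)).trace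
        = ((V * ρ * Vᴴ) * (X ⊗ₖ (1 : Matrix (Fin k) (Fin k) ℂ))).trace := by
      rw [Matrix.trace_mul_cycle', ← Matrix.mul_assoc V ρ, ← Matrix.mul_assoc (V * ρ)]
    have e2 : ((V * ρ * Vᴴ) * (X ⊗ₖ (1 : Matrix (Fin k) (Fin k) ℂ))).trace
        = (schrodinger V ρ * X).trace := by
      simp only [Matrix.trace, Matrix.diag, Matrix.mul_apply, schrodinger, kraus,
        Matrix.sum_apply, Matrix.conjTranspose_apply, Matrix.kroneckerMap_apply,
        Matrix.one_apply, Fintype.sum_prod_type, Finset.sum_mul, Finset.mul_sum, mul_ite,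
        mul_one, mul_zero, Finset.sum_ite_eq, Finset.sum_ite_eq', Finset.mem_univ, if_true]
      refine Finset.sum_congr rfl fun x _ => ?_
      rw [Finset.sum_comm]
    rw [e1, e2, hρstat]
  -- the conditional expectation of G*
  have hRHS : Vᴴ * (((Hm ⊗ₖ (1 : Matrix (Fin k) (Fin k) ℂ)) * V - V * Hm) * Vᴴ) * V
      = Vᴴ * (Hm ⊗ₖ (1 : Matrix (Fin k) (Fin k) ℂ)) * V - Hm := by
    simp only [Matrix.sub_mul, Matrix.mul_sub, Matrix.mul_assoc, hV', hk', hk, hV,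
      Matrix.mul_one]
  rw [hRHS] at hS2
  have hTS : Vᴴ * (S ⊗ₖ (1 : Matrix (Fin k) (Fin k) ℂ)) * V
      = S - (Vᴴ * (Hm ⊗ₖ (1 : Matrix (Fin k) (Fin k) ℂ)) * V - Hm) := by
    rw [← hS2]; abel
  have hconjT : ∀ X : Matrix (Fin D) (Fin D) ℂ,
      (Vᴴ * (X ⊗ₖ (1 : Matrix (Fin k) (Fin k) ℂ)) * V)ᴴ
        = Vᴴ * (Xᴴ ⊗ₖ (1 : Matrix (Fin k) (Fin k) ℂ)) * V := by
    intro X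
    simp only [Matrix.conjTranspose_mul, Matrix.conjTranspose_conjTranspose, kone,
      Matrix.mul_assoc]
  have hTSH : Vᴴ * (Sᴴ ⊗ₖ (1 : Matrix (Fin k) (Fin k) ℂ)) * V
      = Sᴴ - (Vᴴ * (Hm ⊗ₖ (1 : Matrix (Fin k) (Fin k) ℂ)) * V - Hm) := by
    rw [← hconjT, hTS]
    simp only [Matrix.conjTranspose_sub, hconjT, hHm]
  -- the three terms
  set A := (Hm ⊗ₖ (1 : Matrix (Fin k) (Fin k) ℂ)) * V - V * Hm with hA
  have hAconj : (A * Vᴴ)ᴴ = V * (Vᴴ * (Hm ⊗ₖ (1 : Matrix (Fin k) (Fin k) ℂ)) - Hm * Vᴴ) := by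
    rw [hA]
    simp only [Matrix.conjTranspose_mul, Matrix.conjTranspose_sub,
      Matrix.conjTranspose_conjTranspose, kone, hHm]
  have key1 : Vᴴ * ((A * Vᴴ)ᴴ * (A * Vᴴ)) * V
      = Vᴴ * ((Hm * Hm) ⊗ₖ (1 : Matrix (Fin k) (Fin k) ℂ)) * V
        - (Vᴴ * (Hm ⊗ₖ (1 : Matrix (Fin k) (Fin k) ℂ)) * V) * Hm
        - Hm * (Vᴴ * (Hm ⊗ₖ (1 : Matrix (Fin k) (Fin k) ℂ)) * V)
        + Hm * Hm := by
    rw [hAconj, hA]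
    simp only [Matrix.sub_mul, Matrix.mul_sub, Matrix.mul_assoc, hV', hk', hk, hV,
      Matrix.mul_one]
    abel
  have key2 : Vᴴ * ((A * Vᴴ)ᴴ * (S ⊗ₖ (1 : Matrix (Fin k) (Fin k) ℂ))) * V
      = Vᴴ * ((Hm * S) ⊗ₖ (1 : Matrix (Fin k) (Fin k) ℂ)) * V
        - Hm * (Vᴴ * (S ⊗ₖ (1 : Matrix (Fin k) (Fin k) ℂ)) * V) := by
    rw [hAconj]
    simp only [Matrix.sub_mul, Matrix.mul_sub, Matrix.mul_assoc, hV', hk', hk, hV,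
      Matrix.mul_one]
  rw [key1, key2]
  have key3 : (Vᴴ * ((Hm * S) ⊗ₖ (1 : Matrix (Fin k) (Fin k) ℂ)) * V
        - Hm * (Vᴴ * (S ⊗ₖ (1 : Matrix (Fin k) (Fin k) ℂ)) * V))ᴴ
      = Vᴴ * ((Sᴴ * Hm) ⊗ₖ (1 : Matrix (Fin k) (Fin k) ℂ)) * V
        - (Vᴴ * (Sᴴ ⊗ₖ (1 : Matrix (Fin k) (Fin k) ℂ)) * V) * Hm := by
    simp only [Matrix.conjTranspose_sub, Matrix.conjTranspose_mul, hconjT, hHm,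
      Matrix.conjTranspose_conjTranspose, kone]
  rw [key3, hTS, hTSH]
  simp only [Matrix.mul_sub, Matrix.sub_mul, Matrix.mul_add, Matrix.add_mul,
    Matrix.trace_sub, Matrix.trace_add, stat]
  ring
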